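/- Let k ≤ n and let w ∈ S_n fix each of 1, ..., n−k pointwise. Let H ≤ S_n be the subgroup of permutations fixing each of n−k+1, ..., n (the standard copy of S_{n−k}), and let R ⊆ S_n be any complete set of representatives of the left cosets of H in S_n. Then the element Σ_{g ∈ R} g w g^{-1} of ℂ[S_n] lies in the center of ℂ[S_n]. -/

import Mathlib

/-- The standard copy of `S_{n-k}` inside `S_n`: the subgroup of permutations fixing
each of `n-k+1, …, n` (with elements of `{1, …, n}` modelled as `Fin n`, these are
the positions with 0-indexed value `≥ n - k`). -/
def lastFixSubgroup (n k : ℕ) : Subgroup (Equiv.Perm (Fin n)) where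
  carrier := {σ : Equiv.Perm (Fin n) | ∀ a : Fin n, n - k ≤ (a : ℕ) → σ a = a}
  one_mem' := fun _ _ => rfl
  mul_mem' := by
    intro σ τ hσ hτ a ha
    simp only [Equiv.Perm.mul_apply, hτ a ha, hσ a ha]
  inv_mem' := by
    intro σ hσ a ha
    nth_rewrite 1 [← hσ a ha]
    exact σ.symm_apply_apply a

/-- `w` (fixing small indices) commutes with every element of `lastFixSubgroup`. -/
lemma lastFix_comm (n k : ℕ) (w : Equiv.Perm (Fin n))
    (hw : ∀ a : Fin n, (a : ℕ) < n - k → w a = a)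
    (h : Equiv.Perm (Fin n)) (hh : h ∈ lastFixSubgroup n k) :
    h * w = w * h := by
  have hwbig : ∀ a : Fin n, n - k ≤ (a : ℕ) → n - k ≤ ((w a : Fin n) : ℕ) := by
    intro a ha
    by_contra hc
    push_neg at hc
    have := hw (w a) hc
    have : w a = a := w.injective (by rw [this])
    omega
  have hhsmall : ∀ a : Fin n, (a : ℕ) < n - k → ((h a : Fin n) : ℕ) < n - k := by
    intro a ha
    by_contra hc
    push_neg at hc
    have := hh (h a) hc
    have : h a = a := h.injective (by rw [this])
    omega
  ext a
  simp only [Equiv.Perm.mul_apply]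
  rcases lt_or_ge (a : ℕ) (n - k) with hlt | hge
  · rw [hw a hlt, hw (h a) (hhsmall a hlt)]
  · rw [hh a hge, hh (w a) (hwbig a hge)]

/-- Let `k ≤ n`, let `w ∈ S_n` fix each of `1, …, n-k`, and let `R` be any complete
set of representatives of the left cosets of the standard copy `H` of `S_{n-k}`
(fixing `n-k+1, …, n`) in `S_n`.  Then `Σ_{g ∈ R} g w g⁻¹` lies in the center of
the group algebra `ℂ[S_n]`. -/
theorem sum_conj_over_cosetReps_mem_center (n k : ℕ) (hkn : k ≤ n)
    (w : Equiv.Perm (Fin n))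
    (hw : ∀ a : Fin n, (a : ℕ) < n - k → w a = a)
    (R : Finset (Equiv.Perm (Fin n)))
    (hR : ∀ σ : Equiv.Perm (Fin n), ∃! r, r ∈ R ∧ r⁻¹ * σ ∈ lastFixSubgroup n k) :
    (∑ g ∈ R, MonoidAlgebra.of ℂ (Equiv.Perm (Fin n)) (g * w * g⁻¹))
      ∈ Subalgebra.center ℂ (MonoidAlgebra ℂ (Equiv.Perm (Fin n))) := by
  classical
  -- representative function
  choose rep hrep using fun σ => (hR σ).exists
  have hrepmem : ∀ σ, rep σ ∈ R := fun σ => (hrep σ).1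
  have hrepH : ∀ σ, (rep σ)⁻¹ * σ ∈ lastFixSubgroup n k := fun σ => (hrep σ).2
  have hrepuniq : ∀ σ r : Equiv.Perm (Fin n), r ∈ R → r⁻¹ * σ ∈ lastFixSubgroup n k → r = rep σ := by
    intro σ r hr hH
    obtain ⟨r', -, huniq⟩ := hR σ
    rw [huniq r ⟨hr, hH⟩, huniq (rep σ) ⟨hrepmem σ, hrepH σ⟩]
  -- key conjugation identity
  have key : ∀ s g : Equiv.Perm (Fin n), s * (g * w * g⁻¹) = (rep (s * g) * w * (rep (s * g))⁻¹) * s := by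
    intro s g
    set r := rep (s * g)
    have hH : r⁻¹ * (s * g) ∈ lastFixSubgroup n k := hrepH _
    have hcomm := lastFix_comm n k w hw _ hH
    calc s * g * w * g⁻¹ = r * ((r⁻¹ * (s * g)) * w) * g⁻¹ * s⁻¹ * s := by group
      _ = r * (w * (r⁻¹ * (s * g))) * g⁻¹ * s⁻¹ * s := by rw [hcomm]
      _ = r * w * r⁻¹ * s := by group
  -- the map g ↦ rep (s * g) is a bijection of R
  have hbij : ∀ s : Equiv.Perm (Fin n),
      ∑ g ∈ R, MonoidAlgebra.of ℂ (Equiv.Perm (Fin n)) (rep (s * g) * w * (rep (s * g))⁻¹)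
        = ∑ g ∈ R, MonoidAlgebra.of ℂ (Equiv.Perm (Fin n)) (g * w * g⁻¹) := by
    intro s
    refine Finset.sum_nbij' (fun g => rep (s * g)) (fun g => rep (s⁻¹ * g))
      (fun g _ => hrepmem _) (fun g _ => hrepmem _) ?_ ?_ (fun g _ => rfl)
    · intro g hg
      refine (hrepuniq (s⁻¹ * rep (s * g)) g hg ?_).symm
      have := hrepH (s * g)
      have : g⁻¹ * (s⁻¹ * rep (s * g)) = ((rep (s * g))⁻¹ * (s * g))⁻¹ := by group
      rw [this]
      exact inv_mem (hrepH (s * g))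
    · intro g hg
      refine (hrepuniq (s * rep (s⁻¹ * g)) g hg ?_).symm
      have : g⁻¹ * (s * rep (s⁻¹ * g)) = ((rep (s⁻¹ * g))⁻¹ * (s⁻¹ * g))⁻¹ := by group
      rw [this]
      exact inv_mem (hrepH (s⁻¹ * g))
  rw [Subalgebra.mem_center_iff]
  intro b
  induction b using MonoidAlgebra.induction_on with
  | of s =>
      rw [Finset.mul_sum, Finset.sum_mul]
      calc ∑ g ∈ R, MonoidAlgebra.of ℂ (Equiv.Perm (Fin n)) s * MonoidAlgebra.of ℂ (Equiv.Perm (Fin n)) (g * w * g⁻¹)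
          = ∑ g ∈ R, MonoidAlgebra.of ℂ (Equiv.Perm (Fin n)) (rep (s * g) * w * (rep (s * g))⁻¹)
              * MonoidAlgebra.of ℂ (Equiv.Perm (Fin n)) s := by
            refine Finset.sum_congr rfl fun g _ => ?_
            rw [← map_mul, ← map_mul, key s g]
        _ = ∑ g ∈ R, MonoidAlgebra.of ℂ (Equiv.Perm (Fin n)) (g * w * g⁻¹) * MonoidAlgebra.of ℂ (Equiv.Perm (Fin n)) s := by
            rw [← Finset.sum_mul, hbij s, Finset.sum_mul]
  | add f g hf hg => rw [add_mul, mul_add, hf, hg]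
  | smul r f hf => rw [smul_mul_assoc, mul_smul_comm, hf]
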